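/- Let $d \geq 1$, let $R$ be a commutative ring and let $M_j$, $j = 1, \dots, d$, be $R$-modules. For each $j$ let $U^{(j)} : \mathbb{N} \to M_j$ be a sequence with $U^{(j)}_0 = 0$, and define $\Delta^{(j)}_0 := 0$ and $\Delta^{(j)}_i := U^{(j)}_i - U^{(j)}_{i-1}$ for $i \geq 1$. Then for every $k \in \mathbb{N}$ the Smolyak operator of order $k$, $\mathcal{Q}_k^d := \sum_{\alpha \in \mathbb{N}^d, |\alpha|_1 \leq k} \bigotimes_{j=1}^d \Delta^{(j)}_{\alpha_j}$, admits the representation $$\mathcal{Q}_k^d = \sum_{\substack{\alpha \in \mathbb{N}^d, \ \alpha_j \geq 1 \ \forall j \\ |\alpha|_1 \leq k}} \ \sum_{\substack{\gamma \in \{0,1\}^d \\ \alpha_j - \gamma_j \geq 1 \ \forall j}} (-1)^{\gamma_1 + \cdots + \gamma_d} \, \bigotimes_{j=1}^{d} U^{(j)}_{\alpha_j - \gamma_j}$$ as an identity in the tensor product $\bigotimes_{j=1}^d M_j$ over $R$. -/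

import Mathlib

open scoped TensorProduct

/-- The Smolyak sparse quadrature rule of order `k`,
`Q_k^d = ∑_{|α|₁ ≤ k} ⨂_j Δ^{(j)}_{α_j}`, admits the representation as a signed
combination of tensor products of the univariate rules `U^{(j)}`:
`Q_k^d = ∑_{|α|₁ ≤ k, α ≥ 1} ∑_{γ ∈ {0,1}^d, α - γ ≥ 1} (-1)^{|γ|₁} ⨂_j U^{(j)}_{α_j - γ_j}`.
Since every `α` with `|α|₁ ≤ k` satisfies `α j ≤ k` for all `j`, the (finitely supported)
sum over `{α ∈ ℕ^d : |α|₁ ≤ k}` is expressed as a sum over the finite set of functions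
`Fin d → {0, …, k}` with `∑ j, α j ≤ k`. -/
theorem smolyak_rule_representation
    (d : ℕ) (hd : 1 ≤ d) (R : Type*) [CommRing R]
    (M : Fin d → Type*) [∀ j, AddCommGroup (M j)] [∀ j, Module R (M j)]
    (U : ∀ j : Fin d, ℕ → M j) (hU0 : ∀ j, U j 0 = 0)
    (Δ : ∀ j : Fin d, ℕ → M j) (hΔ0 : ∀ j, Δ j 0 = 0)
    (hΔ : ∀ j, ∀ i : ℕ, 1 ≤ i → Δ j i = U j i - U j (i - 1))
    (k : ℕ) :
    (∑ α ∈ (Fintype.piFinset fun _ : Fin d => Finset.range (k + 1)).filter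
        (fun α : Fin d → ℕ => ∑ j, α j ≤ k),
      ⨂ₜ[R] j, Δ j (α j)) =
    ∑ α ∈ (Fintype.piFinset fun _ : Fin d => Finset.range (k + 1)).filter
        (fun α : Fin d → ℕ => (∀ j, 1 ≤ α j) ∧ ∑ j, α j ≤ k),
      ∑ γ ∈ Finset.univ.filter
          (fun γ : Fin d → Bool => ∀ j, 1 ≤ α j - (if γ j then 1 else 0)),
        ((-1 : ℤ) ^ (Finset.univ.filter (fun j => γ j = true)).card) •
          ⨂ₜ[R] j, U j (α j - (if γ j then 1 else 0)) := by
  classical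
  have hsub : (Fintype.piFinset fun _ : Fin d => Finset.range (k + 1)).filter
        (fun α : Fin d → ℕ => (∀ j, 1 ≤ α j) ∧ ∑ j, α j ≤ k) ⊆
      (Fintype.piFinset fun _ : Fin d => Finset.range (k + 1)).filter
        (fun α : Fin d → ℕ => ∑ j, α j ≤ k) :=
    by
      intro α h
      simp only [Finset.mem_filter] at h ⊢
      exact ⟨h.1, h.2.2⟩
  rw [← Finset.sum_subset hsub ?vanish]
  case vanish =>
    intro α hα hα'
    have h1 : ¬ ∀ j, 1 ≤ α j := by
      intro h
      exact hα' (Finset.mem_filter.mpr ⟨(Finset.mem_filter.mp hα).1,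
        ⟨h, (Finset.mem_filter.mp hα).2⟩⟩)
    push_neg at h1
    obtain ⟨j, hj⟩ := h1
    have hj0 : α j = 0 := by omega
    exact (PiTensorProduct.tprod R).map_coord_zero j (by simp [hj0, hΔ0])
  apply Finset.sum_congr rfl
  intro α hα
  have h1 : ∀ j, 1 ≤ α j := ((Finset.mem_filter.mp hα).2).1
  have hrw : (fun j => Δ j (α j)) =
      fun j => ∑ b : Bool, (if b then -(U j (α j - 1)) else U j (α j)) := by
    funext j
    rw [hΔ j (α j) (h1 j)]
    simp [sub_eq_add_neg, add_comm]
  rw [show (⨂ₜ[R] j, Δ j (α j)) = PiTensorProduct.tprod R (fun j => Δ j (α j)) from rfl,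
    hrw, MultilinearMap.map_sum]
  have hterm : ∀ γ : Fin d → Bool,
      (PiTensorProduct.tprod R
        (fun j => if γ j then -(U j (α j - 1)) else U j (α j))) =
      ((-1 : ℤ) ^ (Finset.univ.filter (fun j => γ j = true)).card) •
        ⨂ₜ[R] j, U j (α j - (if γ j then 1 else 0)) := by
    intro γ
    have hc : (fun j => if γ j then -(U j (α j - 1)) else U j (α j)) =
        fun j => (if γ j then (-1 : R) else 1) • U j (α j - (if γ j then 1 else 0)) := by
      funext j
      by_cases h : γ j <;> simp [h]
    rw [hc, MultilinearMap.map_smul_univ]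
    have hprod : (∏ j, (if γ j then (-1 : R) else 1)) =
        (-1 : R) ^ (Finset.univ.filter (fun j => γ j = true)).card := by
      rw [Finset.prod_ite, Finset.prod_const, Finset.prod_const_one, mul_one]
    rw [hprod, ← Int.cast_smul_eq_zsmul R ((-1 : ℤ) ^ _)]
    push_cast
    rfl
  rw [Finset.sum_congr rfl (fun γ _ => hterm γ)]
  rw [← Finset.sum_subset (Finset.filter_subset (fun γ : Fin d → Bool => ∀ j, 1 ≤ α j - (if γ j then 1 else 0)) Finset.univ) ?vanish2]
  case vanish2 =>
    intro γ _ hγ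
    rw [Finset.mem_filter] at hγ
    push_neg at hγ
    obtain ⟨j, hj⟩ := hγ (Finset.mem_univ γ)
    have hj0 : α j - (if γ j then 1 else 0) = 0 := by omega
    rw [(PiTensorProduct.tprod R).map_coord_zero j (by simp [hj0, hU0])]
    exact smul_zero ((-1 : ℤ) ^ (Finset.univ.filter (fun j => γ j = true)).card)
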